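/- Define g₁, g₂ : ℝ → ℝ by g₁(x) := 8 − x³ and g₂(x) := −x² + 6x − 8, so K := {x ∈ ℝ : g₁(x) ≤ 0, g₂(x) ≤ 0} = {2} ∪ [4, +∞), which is closed. Let C := [2, 3], K̃ := C ∩ K = {2}, and x̄ := 2. Then: g₁ and g₂ are tangentially convex at x̄ with g₁(x̄) = g₂(x̄) = 0, ∂_T g₁(x̄) = {−12} and ∂_T g₂(x̄) = {2}; D(x̄) = {0} = T_{K̃}(x̄), so the non-smooth Abadie constraint qualification holds at x̄; K is not nearly convex at x̄; and M(x̄) = ℝ while (K̃ − x̄)° = ℝ and (K − x̄)° = (−∞, 0], so M(x̄) ≠ (K − x̄)°. Hence the near-convexity hypothesis cannot be omitted from the dual cone characterization M(x̄) = (K − x̄)° = (K̃ − x̄)°. -/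

import Mathlib

open Filter Set Pointwise
open scoped Topology RealInnerProductSpace

noncomputable section

variable {E : Type*} [NormedAddCommGroup E] [InnerProductSpace ℝ E]

/-- Directional derivative of `f` at `x` in direction `v`, as the limit of difference
quotients as `α → 0⁺` (defined via `limUnder`; meaningful when the limit exists). -/
noncomputable def dirDeriv (f : E → ℝ) (x v : E) : ℝ :=
  limUnder (𝓝[>] (0:ℝ)) (fun α : ℝ => (f (x + α • v) - f x) / α)

/-- `f` is tangentially convex at `x`: the directional derivative exists (and is finite)
in every direction, and `v ↦ f'(x, v)` is convex. -/
def TangentiallyConvexAt (f : E → ℝ) (x : E) : Prop :=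
  (∀ v : E, Tendsto (fun α : ℝ => (f (x + α • v) - f x) / α) (𝓝[>] (0:ℝ))
      (𝓝 (dirDeriv f x v)))
  ∧ ConvexOn ℝ Set.univ (dirDeriv f x)

/-- The tangential subdifferential `∂_T f (x)`. -/
def tangSubdiff (f : E → ℝ) (x : E) : Set E :=
  {p : E | ∀ v : E, ⟪p, v⟫ ≤ dirDeriv f x v}

/-- The polar cone `(W - x)°`. -/
def polarOf (W : Set E) (x : E) : Set E :=
  {l : E | ∀ y ∈ W, ⟪l, y - x⟫ ≤ 0}

/-- The contingent (Bouligand tangent) cone of `U` at `x`. -/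
def contingentCone (U : Set E) (x : E) : Set E :=
  {v : E | ∃ (a : ℕ → ℝ) (w : ℕ → E), (∀ k, 0 < a k) ∧
    Tendsto a atTop (𝓝 0) ∧ Tendsto w atTop (𝓝 v) ∧ ∀ k, x + a k • w k ∈ U}

/-- `V` is nearly convex at `x ∈ V`. -/
def NearlyConvexAt (V : Set E) (x : E) : Prop :=
  ∀ y ∈ V, ∃ t : ℕ → ℝ, (∀ k, 0 < t k) ∧ Tendsto t atTop (𝓝 0) ∧
    ∀ᶠ k in atTop, x + t k • (y - x) ∈ V

/-- The non-smooth linearized tangential cone `D(x)`. -/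
def linTangCone {m : ℕ} (g : Fin m → E → ℝ) (x : E) : Set E :=
  {v : E | ∀ j : Fin m, g j x = 0 → ∀ η ∈ tangSubdiff (g j) x, ⟪v, η⟫ ≤ 0}

/-- The set `M(x)` of nonnegative combinations of tangential subgradients of active
constraints. -/
def Mset {m : ℕ} (g : Fin m → E → ℝ) (x : E) : Set E :=
  {u : E | ∃ (lam : Fin m → ℝ) (η : Fin m → E),
    (∀ j, 0 ≤ lam j) ∧ (∀ j, lam j * g j x = 0) ∧
    (∀ j, η j ∈ tangSubdiff (g j) x) ∧ u = ∑ j, lam j • η j}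

/-- `w = P_W(x)`: `w` is a best approximation of `x` from `W`. -/
def IsBestApprox (W : Set E) (x w : E) : Prop :=
  w ∈ W ∧ ∀ u ∈ W, ‖x - w‖ ≤ ‖x - u‖

/-- The convex subdifferential of `h` at `x₀`. -/
def convexSubdiff (h : E → ℝ) (x₀ : E) : Set E :=
  {p : E | ∀ y : E, ⟪p, y - x₀⟫ ≤ h y - h x₀}


/-- The constraint functions of Example 3.2: `g₁(x) = 8 - x³`, `g₂(x) = -x² + 6x - 8`. -/
def exg16 : Fin 2 → ℝ → ℝ := ![fun x => 8 - x ^ 3, fun x => -x ^ 2 + 6 * x - 8]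

/-- The constraint set of Example 3.2. -/
def exK16 : Set ℝ := {x | ∀ j : Fin 2, exg16 j x ≤ 0}

/-- The set `C` of Example 3.2. -/
def exC16 : Set ℝ := Set.Icc 2 3


lemma inner_real (p v : ℝ) : ⟪p, v⟫ = p * v := by simp [RCLike.inner_apply]; ring

lemma gval0 : exg16 0 2 = 0 := by norm_num [exg16]
lemma gval1 : exg16 1 2 = 0 := by norm_num [exg16]

lemma tendsto0 (v : ℝ) :
    Tendsto (fun α : ℝ => (exg16 0 (2 + α • v) - exg16 0 2) / α) (𝓝[>] (0:ℝ))
      (𝓝 (-12 * v)) := by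
  have h : Continuous fun α : ℝ => -12*v - 6*α*v^2 - α^2*v^3 := by continuity
  refine ((h.tendsto' 0 _ (by ring)).mono_left nhdsWithin_le_nhds).congr' ?_
  filter_upwards [self_mem_nhdsWithin] with α (hα : (0:ℝ) < α)
  have hne : α ≠ 0 := ne_of_gt hα
  simp only [exg16, Matrix.cons_val_zero, smul_eq_mul]
  field_simp
  ring

lemma tendsto1 (v : ℝ) :
    Tendsto (fun α : ℝ => (exg16 1 (2 + α • v) - exg16 1 2) / α) (𝓝[>] (0:ℝ))
      (𝓝 (2 * v)) := by
  have h : Continuous fun α : ℝ => 2*v - α*v^2 := by continuity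
  refine ((h.tendsto' 0 _ (by ring)).mono_left nhdsWithin_le_nhds).congr' ?_
  filter_upwards [self_mem_nhdsWithin] with α (hα : (0:ℝ) < α)
  have hne : α ≠ 0 := ne_of_gt hα
  simp only [exg16, Matrix.cons_val_one, Matrix.head_cons, Matrix.cons_val_zero, smul_eq_mul]
  field_simp
  ring

lemma dd0 (v : ℝ) : dirDeriv (exg16 0) 2 v = -12 * v := (tendsto0 v).limUnder_eq
lemma dd1 (v : ℝ) : dirDeriv (exg16 1) 2 v = 2 * v := (tendsto1 v).limUnder_eq

lemma convexOn_mul_left (c : ℝ) : ConvexOn ℝ Set.univ (fun v : ℝ => c * v) := by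
  refine ⟨convex_univ, fun x _ y _ a b _ _ _ => ?_⟩
  simp only [smul_eq_mul]
  exact le_of_eq (by ring)

lemma tang0 : tangSubdiff (exg16 0) 2 = {-12} := by
  ext p
  simp only [tangSubdiff, mem_setOf_eq, mem_singleton_iff]
  constructor
  · intro h
    have h1 := h 1; have h2 := h (-1)
    rw [inner_real, dd0] at h1 h2
    linarith
  · rintro rfl v
    rw [inner_real, dd0]

lemma tang1 : tangSubdiff (exg16 1) 2 = {2} := by
  ext p
  simp only [tangSubdiff, mem_setOf_eq, mem_singleton_iff]
  constructor
  · intro h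
    have h1 := h 1; have h2 := h (-1)
    rw [inner_real, dd1] at h1 h2
    linarith
  · rintro rfl v
    rw [inner_real, dd1]

lemma exK16_eq : exK16 = {2} ∪ Set.Ici 4 := by
  ext x
  simp only [exK16, mem_setOf_eq, Fin.forall_fin_two, exg16, Matrix.cons_val_zero,
    Matrix.cons_val_one, Matrix.head_cons, mem_union, mem_singleton_iff, mem_Ici]
  constructor
  · rintro ⟨h0, h1⟩
    have hx2 : 2 ≤ x := by nlinarith [sq_nonneg (x+1)]
    rcases eq_or_lt_of_le hx2 with heq | hlt
    · exact Or.inl heq.symm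
    · right; nlinarith
  · rintro (rfl | h4)
    · norm_num
    · exact ⟨by nlinarith [sq_nonneg (x-4), mul_nonneg (sub_nonneg.2 h4) (sq_nonneg x)], by nlinarith⟩

lemma exCK : exC16 ∩ exK16 = {2} := by
  rw [exK16_eq]
  ext x
  simp only [exC16, mem_inter_iff, mem_Icc, mem_union, mem_singleton_iff, mem_Ici]
  constructor
  · rintro ⟨⟨h2, h3⟩, rfl | h4⟩
    · rfl
    · linarith
  · rintro rfl; norm_num

lemma linT : linTangCone exg16 2 = {0} := by
  ext v
  simp only [linTangCone, mem_setOf_eq, mem_singleton_iff]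
  constructor
  · intro h
    have h0 := h 0 gval0 (-12) (by rw [tang0]; rfl)
    have h1 := h 1 gval1 2 (by rw [tang1]; rfl)
    rw [inner_real] at h0 h1
    linarith
  · rintro rfl j _ η _
    rw [inner_real]
    simp

lemma contC : contingentCone (exC16 ∩ exK16) 2 = {0} := by
  rw [exCK]
  ext v
  simp only [contingentCone, mem_setOf_eq, mem_singleton_iff, smul_eq_mul]
  constructor
  · rintro ⟨a, w, hpos, ha, hw, hmem⟩
    have hw0 : ∀ k, w k = 0 := by
      intro k
      have h2 : (2:ℝ) + a k * w k = 2 := hmem k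
      have h3 : a k * w k = 0 := by linarith
      exact (mul_eq_zero.1 h3).resolve_left (hpos k).ne'
    have hweq : w = fun _ => (0:ℝ) := funext hw0
    rw [hweq] at hw
    exact tendsto_nhds_unique hw tendsto_const_nhds
  · rintro rfl
    refine ⟨fun k => 1/(k+1), fun _ => 0, fun k => by positivity,
      tendsto_one_div_add_atTop_nhds_zero_nat, tendsto_const_nhds, fun k => by simp⟩

lemma notNC : ¬ NearlyConvexAt exK16 2 := by
  intro h
  obtain ⟨t, hpos, ht, hev⟩ := h 4 (by rw [exK16_eq]; exact Or.inr (by norm_num))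
  have h1 : ∀ᶠ k in atTop, t k < 1 := ht.eventually_lt_const (by norm_num)
  obtain ⟨k, hk1, hk2⟩ := (h1.and hev).exists
  rw [exK16_eq] at hk2
  simp only [smul_eq_mul, mem_union, mem_singleton_iff, mem_Ici] at hk2
  have := hpos k
  rcases hk2 with h' | h' <;> [nlinarith; nlinarith]

lemma msetU : Mset exg16 2 = Set.univ := by
  ext u
  simp only [Mset, mem_setOf_eq, mem_univ, iff_true]
  by_cases hu : 0 ≤ u
  · refine ⟨![0, u/2], ![-12, 2], ?_, ?_, ?_, ?_⟩
    · rw [Fin.forall_fin_two]; exact ⟨by norm_num, by simp; linarith⟩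
    · rw [Fin.forall_fin_two]; simp [gval0, gval1]
    · rw [Fin.forall_fin_two]; constructor <;> simp [tang0, tang1]
    · simp [Fin.sum_univ_two, smul_eq_mul]; try ring
  · refine ⟨![(-u)/12, 0], ![-12, 2], ?_, ?_, ?_, ?_⟩
    · rw [Fin.forall_fin_two]; exact ⟨by simp; linarith, by norm_num⟩
    · rw [Fin.forall_fin_two]; simp [gval0, gval1]
    · rw [Fin.forall_fin_two]; constructor <;> simp [tang0, tang1]
    · simp [Fin.sum_univ_two, smul_eq_mul]; try ring

lemma polCK : polarOf (exC16 ∩ exK16) 2 = Set.univ := by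
  rw [exCK]
  ext l
  simp only [polarOf, mem_setOf_eq, mem_univ, iff_true, mem_singleton_iff]
  rintro y rfl
  simp

lemma polK : polarOf exK16 2 = Set.Iic 0 := by
  rw [exK16_eq]
  ext l
  simp only [polarOf, mem_setOf_eq, mem_Iic, mem_union, mem_singleton_iff, mem_Ici]
  constructor
  · intro h
    have := h 4 (Or.inr le_rfl)
    rw [inner_real] at this
    nlinarith
  · intro hl y hy
    rw [inner_real]
    rcases hy with rfl | hy
    · simp
    · nlinarith


/-- Example 3.2: with `K = {2} ∪ [4, ∞)`, `C = [2,3]`, `K̃ = {2}` and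
`x̄ = 2`, the constraints are tangentially convex at `x̄` with `g₁(x̄) = g₂(x̄) = 0`,
`∂_T g₁(x̄) = {-12}`, `∂_T g₂(x̄) = {2}`; NACQ holds at `x̄` (`D(x̄) = {0} = T_{K̃}(x̄)`);
`K` is not nearly convex at `x̄`; and `M(x̄) = ℝ ≠ (-∞, 0] = (K - x̄)°` while
`(K̃ - x̄)° = ℝ`: near convexity cannot be omitted from Theorem 3.1. -/
theorem example_nearly_convex_needed :
    exK16 = {2} ∪ Set.Ici 4 ∧ IsClosed exK16 ∧
    exC16 ∩ exK16 = {2} ∧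
    (∀ j : Fin 2, TangentiallyConvexAt (exg16 j) 2) ∧
    (∀ j : Fin 2, exg16 j 2 = 0) ∧
    tangSubdiff (exg16 0) 2 = {-12} ∧
    tangSubdiff (exg16 1) 2 = {2} ∧
    linTangCone exg16 2 = {0} ∧
    contingentCone (exC16 ∩ exK16) 2 = {0} ∧
    ¬ NearlyConvexAt exK16 2 ∧
    Mset exg16 2 = Set.univ ∧
    polarOf (exC16 ∩ exK16) 2 = Set.univ ∧
    polarOf exK16 2 = Set.Iic 0 ∧
    Mset exg16 2 ≠ polarOf exK16 2 := by
  refine ⟨exK16_eq, by rw [exK16_eq]; exact isClosed_singleton.union isClosed_Ici,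
    exCK, ?_, ?_, tang0, tang1, linT, contC, notNC, msetU, polCK, polK, ?_⟩
  · rw [Fin.forall_fin_two]
    constructor
    · constructor
      · intro v; rw [dd0]; exact tendsto0 v
      · have : dirDeriv (exg16 0) 2 = fun v => -12 * v := funext dd0
        rw [this]; exact convexOn_mul_left _
    · constructor
      · intro v; rw [dd1]; exact tendsto1 v
      · have : dirDeriv (exg16 1) 2 = fun v => 2 * v := funext dd1
        rw [this]; exact convexOn_mul_left _
  · rw [Fin.forall_fin_two]; exact ⟨gval0, gval1⟩
  · rw [msetU, polK]
    intro h
    have : (1:ℝ) ∈ Set.Iic 0 := h ▸ mem_univ 1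
    norm_num at this


end
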